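/- Let (X,T) and (Y,S) be Borel systems and t > 0. Suppose that for each s < t there is an s-slice X_s of (X,T) and a Borel injection φ_s : X_s → Y with φ_s ∘ T = S ∘ φ_s on X_s. Then there is a t-slice X_t of (X,T) and a Borel injection φ : X_t → Y with φ ∘ T = S ∘ φ on X_t. -/

import Mathlib

/-!
Common definitions: Borel systems, ergodic measures, Kolmogorov–Sinai entropy,
Gurevich entropy, embeddings/isomorphisms on full sets, universality, slices,
shift spaces (SFTs, sofic shifts, countable-state Markov shifts, β-shifts,
synchronized subshifts) and generic points.
-/

open MeasureTheory Filter Set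
open scoped ENNReal

/-- A Borel system: an uncountable standard Borel space together with a Borel
bijection whose inverse is also Borel (expressed via measurability of forward
images of measurable sets). -/
structure IsBorelSystem (X : Type*) [MeasurableSpace X] (T : X → X) : Prop where
  std : StandardBorelSpace X
  unc : Uncountable X
  bij : Function.Bijective T
  meas : Measurable T
  image_meas : ∀ s : Set X, MeasurableSet s → MeasurableSet (T '' s)

/-- Freeness: no periodic points.  (For a bijection `T`, `T^[n] x ≠ x` for all
`n > 0` is equivalent to `Tⁿ x ≠ x` for all integers `n ≠ 0`.) -/
def IsFreeSystem {X : Type*} (T : X → X) : Prop :=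
  ∀ (x : X) (n : ℕ), 0 < n → T^[n] x ≠ x

/-- The set of aperiodic (non-periodic) points of `T`. -/
def FreePart {X : Type*} (T : X → X) : Set X :=
  {x | ∀ n : ℕ, 0 < n → T^[n] x ≠ x}

/-- The ergodic `T`-invariant Borel probability measures. -/
def ErgodicMeasures {X : Type*} [MeasurableSpace X] (T : X → X) : Set (Measure X) :=
  {μ | IsProbabilityMeasure μ ∧ Ergodic T μ}

/-- The `T`-invariant Borel probability measures. -/
def InvariantProbMeasures {X : Type*} [MeasurableSpace X] (T : X → X) : Set (Measure X) :=
  {μ | IsProbabilityMeasure μ ∧ MeasurePreserving T μ μ}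

/-- A set is universally null if it is null for every ergodic invariant
probability measure. -/
def UniversallyNull {X : Type*} [MeasurableSpace X] (T : X → X) (A : Set X) : Prop :=
  ∀ μ ∈ ErgodicMeasures T, μ A = 0

/-- A set is full if its complement is universally null. -/
def IsFullSet {X : Type*} [MeasurableSpace X] (T : X → X) (A : Set X) : Prop :=
  UniversallyNull T Aᶜ

/-- The Shannon entropy of the distribution of the `(n+1)`-block process
generated by a finite measurable partition (coded by `f : X → Fin k`). -/
noncomputable def processEntropy {X : Type*} [MeasurableSpace X] (T : X → X) (μ : Measure X)
    {k : ℕ} (f : X → Fin k) (n : ℕ) : ℝ :=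
  ∑ a : Fin (n + 1) → Fin k,
    Real.negMulLog (μ {x | ∀ i : Fin (n + 1), f (T^[(i : ℕ)] x) = a i}).toReal

/-- Kolmogorov–Sinai entropy of `μ` under `T`: the supremum over finite
measurable partitions of the entropy rate of the generated process (the limit
equals the infimum by subadditivity). -/
noncomputable def ksEntropy {X : Type*} [MeasurableSpace X] (T : X → X) (μ : Measure X) : ℝ≥0∞ :=
  ⨆ (k : ℕ) (f : {f : X → Fin k // Measurable f}),
    ⨅ n : ℕ, ENNReal.ofReal (processEntropy T μ f.1 n / (n + 1))

/-- Gurevich entropy: the supremum of Kolmogorov–Sinai entropies over ergodic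
invariant probability measures (`⊥ = -∞` if there are none). -/
noncomputable def gurevichEntropy {X : Type*} [MeasurableSpace X] (T : X → X) : EReal :=
  ⨆ μ ∈ ErgodicMeasures T, ((ksEntropy T μ : ℝ≥0∞) : EReal)

/-- The supremum of Kolmogorov–Sinai entropies over all invariant probability
measures; for a compact system this is the topological entropy (variational
principle). -/
noncomputable def supInvEntropy {X : Type*} [MeasurableSpace X] (T : X → X) : EReal :=
  ⨆ μ ∈ InvariantProbMeasures T, ((ksEntropy T μ : ℝ≥0∞) : EReal)

/-- Restriction of a map to an invariant subset. -/
def restrictMap {X : Type*} (T : X → X) (A : Set X) (h : Set.MapsTo T A A) : A → A :=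
  fun x => ⟨T x.1, h x.2⟩

/-- `(X,T)` embeds into `(Y,S)` on a full set. -/
def EmbedsOnFullSet {X Y : Type*} [MeasurableSpace X] [MeasurableSpace Y]
    (T : X → X) (S : Y → Y) : Prop :=
  ∃ A : Set X, MeasurableSet A ∧ T ⁻¹' A = A ∧ IsFullSet T A ∧
    ∃ φ : X → Y, Set.InjOn φ A ∧ Measurable (A.restrict φ) ∧ ∀ x ∈ A, φ (T x) = S (φ x)

/-- `(X,T)` and `(Y,S)` are Borel isomorphic on full sets. -/
def IsomorphicOnFullSets {X Y : Type*} [MeasurableSpace X] [MeasurableSpace Y]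
    (T : X → X) (S : Y → Y) : Prop :=
  ∃ (A : Set X) (B : Set Y), MeasurableSet A ∧ MeasurableSet B ∧
    T ⁻¹' A = A ∧ S ⁻¹' B = B ∧ IsFullSet T A ∧ IsFullSet S B ∧
    ∃ φ : X → Y, Set.InjOn φ A ∧ φ '' A = B ∧ Measurable (A.restrict φ) ∧
      ∀ x ∈ A, φ (T x) = S (φ x)

/-- `t`-universality: every free Borel system of Gurevich entropy `< t` embeds
into the given system on a full set. -/
def IsUniversal {X : Type*} [MeasurableSpace X] (T : X → X) (t : ℝ) : Prop :=
  ∀ (Y : Type) [MeasurableSpace Y] (S : Y → Y),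
    IsBorelSystem Y S → IsFreeSystem S → gurevichEntropy S < (t : EReal) →
      EmbedsOnFullSet S T

/-- Strict `t`-universality: `t`-universal, free, and all ergodic invariant
measures have entropy `< t`. -/
def IsStrictlyUniversal {X : Type*} [MeasurableSpace X] (T : X → X) (t : ℝ) : Prop :=
  IsUniversal T t ∧ IsFreeSystem T ∧
    ∀ μ ∈ ErgodicMeasures T, ksEntropy T μ < ENNReal.ofReal t

/-- A `t`-slice: a Borel set of full measure for every ergodic invariant
measure of entropy `< t`, and null for every other ergodic invariant measure. -/
def IsSlice {X : Type*} [MeasurableSpace X] (T : X → X) (t : ℝ) (A : Set X) : Prop :=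
  MeasurableSet A ∧ ∀ μ ∈ ErgodicMeasures T,
    (ksEntropy T μ < ENNReal.ofReal t → μ A = 1) ∧
    (ENNReal.ofReal t ≤ ksEntropy T μ → μ A = 0)

/-- A free `t`-slice: a `t`-slice of the free part (ergodic measures of the
free part correspond to the ergodic measures of `T` giving the free part full
measure). -/
def IsFreeSlice {X : Type*} [MeasurableSpace X] (T : X → X) (t : ℝ) (A : Set X) : Prop :=
  MeasurableSet A ∧ A ⊆ FreePart T ∧
    ∀ μ ∈ ErgodicMeasures T, μ (FreePart T) = 1 →
      (ksEntropy T μ < ENNReal.ofReal t → μ A = 1) ∧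
      (ENNReal.ofReal t ≤ ksEntropy T μ → μ A = 0)

/-! ### Shift spaces -/

/-- The shift map on `ℤ → A`. -/
def fullShift (A : Type*) : (ℤ → A) → (ℤ → A) := fun x i => x (i + 1)

/-- Translation by `n` on `ℤ → A` (the `n`-th power of the shift). -/
def intShift (A : Type*) (n : ℤ) : (ℤ → A) → (ℤ → A) := fun x i => x (i + n)

lemma fullShift_injective (A : Type*) : Function.Injective (fullShift A) := by
  intro x y h
  funext i
  have := congrFun h (i - 1)
  simpa [fullShift] using this

lemma freePart_mapsTo {X : Type*} {T : X → X} (hT : Function.Injective T) :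
    Set.MapsTo T (FreePart T) (FreePart T) := by
  intro x hx n hn hfix
  refine hx n hn (hT ?_)
  rw [← Function.iterate_succ_apply, Function.iterate_succ_apply'] at hfix
  exact hfix

lemma restrictMap_injective {X : Type*} {T : X → X} (hT : Function.Injective T)
    {A : Set X} (h : Set.MapsTo T A A) : Function.Injective (restrictMap T A h) := by
  intro x y hxy
  exact Subtype.ext (hT (congrArg Subtype.val hxy))

/-- The free part of a system, as a system. -/
def freePartSystem {X : Type*} (T : X → X) (hT : Function.Injective T) :
    FreePart T → FreePart T :=
  restrictMap T (FreePart T) (freePart_mapsTo hT)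

/-- The space of bi-infinite edge paths in a directed graph with edge set `E`,
vertex set `V` and source/target maps `src`, `tgt`. -/
def EdgeShiftSpace {V E : Type*} (src tgt : E → V) : Set (ℤ → E) :=
  {x | ∀ i : ℤ, tgt (x i) = src (x (i + 1))}

lemma edgeShiftSpace_mapsTo {V E : Type*} (src tgt : E → V) :
    Set.MapsTo (fullShift E) (EdgeShiftSpace src tgt) (EdgeShiftSpace src tgt) :=
  fun _ hx i => hx (i + 1)

/-- The edge shift of a directed graph (SFT for finite graphs, countable-state
Markov shift for countable graphs). -/
def edgeShift {V E : Type*} (src tgt : E → V) :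
    EdgeShiftSpace src tgt → EdgeShiftSpace src tgt :=
  restrictMap (fullShift E) _ (edgeShiftSpace_mapsTo src tgt)

lemma edgeShift_injective {V E : Type*} (src tgt : E → V) :
    Function.Injective (edgeShift src tgt) :=
  restrictMap_injective (fullShift_injective E) _

/-- There is a directed path with `n+1` edges from `u` to `w`. -/
def HasPathLen {V E : Type*} (src tgt : E → V) (u w : V) (n : ℕ) : Prop :=
  ∃ p : ℕ → E, src (p 0) = u ∧ tgt (p n) = w ∧ ∀ i < n, tgt (p i) = src (p (i + 1))

/-- Strong connectivity: a directed path between every pair of vertices. -/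
def StronglyConnectedGraph {V E : Type*} (src tgt : E → V) : Prop :=
  ∀ u w : V, ∃ n : ℕ, HasPathLen src tgt u w n

/-- Aperiodicity: for some `N`, every vertex has cycles of every length `> N`. -/
def AperiodicGraph {V E : Type*} (src tgt : E → V) : Prop :=
  ∃ N : ℕ, ∀ u : V, ∀ n ≥ N, HasPathLen src tgt u u n

/-- A finite directed graph defining a mixing SFT: strongly connected and
aperiodic. -/
def IsMixingSFTGraph {v e : ℕ} (src tgt : Fin e → Fin v) : Prop :=
  StronglyConnectedGraph src tgt ∧ AperiodicGraph src tgt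

/-- The gcd of the cycle lengths is `1`. -/
def GcdOneCycles {V E : Type*} (src tgt : E → V) : Prop :=
  ∀ d : ℕ, (∀ (u : V) (n : ℕ), HasPathLen src tgt u u n → d ∣ (n + 1)) → d = 1

/-- `p` is the period of the graph: the gcd of the lengths of its cycles. -/
def HasPeriod {V E : Type*} (src tgt : E → V) (p : ℕ) : Prop :=
  (∀ (u : V) (n : ℕ), HasPathLen src tgt u u n → p ∣ (n + 1)) ∧
    ∀ q : ℕ, (∀ (u : V) (n : ℕ), HasPathLen src tgt u u n → q ∣ (n + 1)) → q ∣ p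

/-- First-return loops at `u` with `n+1` edges: paths from `u` to `u` not
visiting `u` in between. -/
def FirstReturnLoop {V E : Type*} (src tgt : E → V) (u : V) (n : ℕ) :
    Set (Fin (n + 1) → E) :=
  {p | src (p 0) = u ∧ tgt (p (Fin.last n)) = u ∧
    (∀ i : Fin n, tgt (p i.castSucc) = src (p i.succ)) ∧
    ∀ i : Fin (n + 1), i ≠ 0 → src (p i) ≠ u}

/-- `Σ fₙ λ⁻ⁿ`, where `fₙ` is the number of first-return loops of length `n`. -/
noncomputable def firstReturnSeries {V E : Type*} (src tgt : E → V) (u : V) (lam : ℝ) : ℝ≥0∞ :=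
  ∑' n : ℕ, (∑' _p : FirstReturnLoop src tgt u n, (1 : ℝ≥0∞)) *
    ENNReal.ofReal ((lam ^ (n + 1))⁻¹)

/-- `Σ n fₙ λ⁻ⁿ`. -/
noncomputable def firstReturnWeightedSeries {V E : Type*} (src tgt : E → V) (u : V)
    (lam : ℝ) : ℝ≥0∞ :=
  ∑' n : ℕ, ((n : ℝ≥0∞) + 1) * (∑' _p : FirstReturnLoop src tgt u n, (1 : ℝ≥0∞)) *
    ENNReal.ofReal ((lam ^ (n + 1))⁻¹)

/-- Recurrence of a Markov shift of Gurevich entropy `log lam`, at vertex `u`. -/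
def IsRecurrentMarkov {V E : Type*} (src tgt : E → V) (u : V) (lam : ℝ) : Prop :=
  firstReturnSeries src tgt u lam = 1

/-- Positive recurrence of a Markov shift of Gurevich entropy `log lam`. -/
def IsPositiveRecurrentMarkov {V E : Type*} (src tgt : E → V) (u : V) (lam : ℝ) : Prop :=
  firstReturnSeries src tgt u lam = 1 ∧ firstReturnWeightedSeries src tgt u lam ≠ ⊤

/-! ### Subshifts, words -/

/-- The word `b` appears in some point of `Z`. -/
def wordAppearsIn {A : Type*} (Z : Set (ℤ → A)) {k : ℕ} (b : Fin k → A) : Prop :=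
  ∃ z ∈ Z, ∃ i : ℤ, ∀ j : Fin k, z (i + ((j : ℕ) : ℤ)) = b j

/-- Topological mixing of a subshift, in terms of words: any two admissible
words can be glued with every sufficiently large gap. -/
def IsMixingSubshiftSet {A : Type*} (Z : Set (ℤ → A)) : Prop :=
  ∀ (k l : ℕ) (b : Fin k → A) (c : Fin l → A),
    wordAppearsIn Z b → wordAppearsIn Z c →
      ∃ N : ℕ, ∀ n : ℕ, N ≤ n → ∃ z ∈ Z, ∃ i : ℤ,
        (∀ j : Fin k, z (i + ((j : ℕ) : ℤ)) = b j) ∧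
        (∀ j : Fin l, z (i + (n : ℤ) + ((j : ℕ) : ℤ)) = c j)

/-- Topological transitivity of a subshift, in terms of words. -/
def IsTopTransitiveSubshift {A : Type*} (Z : Set (ℤ → A)) : Prop :=
  ∀ (k l : ℕ) (b : Fin k → A) (c : Fin l → A),
    wordAppearsIn Z b → wordAppearsIn Z c →
      ∃ z ∈ Z, ∃ i : ℤ, ∃ n : ℕ,
        (∀ j : Fin k, z (i + ((j : ℕ) : ℤ)) = b j) ∧
        (∀ j : Fin l, z (i + (k : ℤ) + (n : ℤ) + ((j : ℕ) : ℤ)) = c j)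

/-- `Z` is a (two-sided) subshift: invariant under the shift and its inverse,
and closed (every point all of whose windows are matched by points of `Z`
belongs to `Z`). -/
def IsSubshiftSet {A : Type*} (Z : Set (ℤ → A)) : Prop :=
  Set.MapsTo (fullShift A) Z Z ∧ Set.MapsTo (intShift A (-1)) Z Z ∧
    ∀ y : ℤ → A, (∀ k : ℕ, ∃ z ∈ Z, ∀ j : ℤ, |j| ≤ (k : ℤ) → z j = y j) → y ∈ Z

/-- A synchronizing word for the subshift `Z`. -/
def HasSynchronizingWord {A : Type*} (Z : Set (ℤ → A)) : Prop :=
  ∃ (k : ℕ) (w : Fin k → A), wordAppearsIn Z w ∧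
    ∀ (m n : ℕ) (u : Fin m → A) (v : Fin n → A),
      wordAppearsIn Z (Fin.append u w) → wordAppearsIn Z (Fin.append w v) →
        wordAppearsIn Z (Fin.append (Fin.append u w) v)

/-- The sofic shift presented by a labeled finite graph: bi-infinite label
sequences of edge paths. -/
def SoficSpace {a v e : ℕ} (src tgt : Fin e → Fin v) (lab : Fin e → Fin a) :
    Set (ℤ → Fin a) :=
  {y | ∃ x ∈ EdgeShiftSpace src tgt, ∀ i : ℤ, lab (x i) = y i}

lemma soficSpace_mapsTo {a v e : ℕ} (src tgt : Fin e → Fin v) (lab : Fin e → Fin a) :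
    Set.MapsTo (fullShift (Fin a)) (SoficSpace src tgt lab) (SoficSpace src tgt lab) := by
  rintro y ⟨x, hx, hl⟩
  exact ⟨fullShift (Fin e) x, edgeShiftSpace_mapsTo src tgt hx, fun i => hl (i + 1)⟩

/-- The shift map on a sofic shift. -/
def soficShift {a v e : ℕ} (src tgt : Fin e → Fin v) (lab : Fin e → Fin a) :
    SoficSpace src tgt lab → SoficSpace src tgt lab :=
  restrictMap (fullShift (Fin a)) _ (soficSpace_mapsTo src tgt lab)

lemma soficShift_injective {a v e : ℕ} (src tgt : Fin e → Fin v) (lab : Fin e → Fin a) :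
    Function.Injective (soficShift src tgt lab) :=
  restrictMap_injective (fullShift_injective (Fin a)) _

/-! ### β-shifts -/

/-- The β-transformation `y ↦ βy mod 1`. -/
noncomputable def betaMap (β : ℝ) : ℝ → ℝ := fun y => Int.fract (β * y)

/-- The `n`-th digit of the greedy β-expansion of `x ∈ [0,1)`. -/
noncomputable def betaDigit (β : ℝ) (x : ℝ) (n : ℕ) : ℕ :=
  (⌊β * (betaMap β)^[n] x⌋).toNat

/-- The natural extension of the β-shift: bi-infinite sequences all of whose
finite windows are admissible for the (one-sided) β-shift, i.e. occur as
initial segments of greedy β-expansions. -/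
def BetaNaturalExtension (β : ℝ) : Set (ℤ → ℕ) :=
  {y | ∀ (i : ℤ) (k : ℕ), ∃ x ∈ Set.Ico (0 : ℝ) 1,
    ∀ j < k, betaDigit β x j = y (i + (j : ℤ))}

lemma betaNaturalExtension_mapsTo (β : ℝ) :
    Set.MapsTo (fullShift ℕ) (BetaNaturalExtension β) (BetaNaturalExtension β) := by
  intro y hy i k
  obtain ⟨x, hx, h⟩ := hy (i + 1) k
  refine ⟨x, hx, fun j hj => ?_⟩
  have := h j hj
  simpa [fullShift, add_assoc, add_comm, add_left_comm] using this

/-- The natural extension of the β-shift, as a dynamical system. -/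
noncomputable def betaExtShift (β : ℝ) :
    BetaNaturalExtension β → BetaNaturalExtension β :=
  restrictMap (fullShift ℕ) _ (betaNaturalExtension_mapsTo β)

/-! ### Generic points -/

/-- The basic cylinder sets of `ℕ^ℤ`. -/
def cylinderSets : Set (Set (ℤ → ℕ)) := {C | ∃ (i : ℤ) (a : ℕ), C = {x | x i = a}}

/-- The algebra of sets generated by the cylinder sets. -/
def cylinderAlgebra : Set (Set (ℤ → ℕ)) := MeasureTheory.generateSetAlgebra cylinderSets

/-- `x` is a generic point for `μ`: the two-sided ergodic averages of every set
in the cylinder algebra converge to its measure. -/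
def IsGenericPointFor (μ : Measure (ℤ → ℕ)) (x : ℤ → ℕ) : Prop :=
  ∀ C ∈ cylinderAlgebra,
    Filter.Tendsto
      (fun N : ℕ => (2 * (N : ℝ) + 1)⁻¹ *
        ∑ n ∈ Finset.Icc (-(N : ℤ)) (N : ℤ), C.indicator (fun _ => (1 : ℝ)) (intShift ℕ n x))
      Filter.atTop (nhds (μ C).toReal)

/-- The set of points generic for `μ`. -/
def genericSet (μ : Measure (ℤ → ℕ)) : Set (ℤ → ℕ) := {x | IsGenericPointFor μ x}

/-! ### Blocks and finitary codes -/

/-- A finite block over the alphabet `Fin e`, of odd length `2k+1`. -/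
def EdgeBlock (e : ℕ) : Type := Σ k : ℕ, Fin (2 * k + 1) → Fin e

/-- The block `b` matches `y` on the window of radius `b.1` centered at `i`. -/
def blockMatchesAt {e : ℕ} (y : ℤ → Fin e) (i : ℤ) (b : EdgeBlock e) : Prop :=
  ∀ j : Fin (2 * b.1 + 1), b.2 j = y (i + ((j : ℕ) : ℤ) - (b.1 : ℤ))



private lemma measure_eq_of_inter_conull' {X : Type*} [MeasurableSpace X]
    (μ : MeasureTheory.Measure X) {P Q G : Set X} (hG : μ Gᶜ = 0) (h : P ∩ G = Q ∩ G) :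
    μ P = μ Q := by
  rw [← MeasureTheory.measure_inter_conull (μ := μ) (s := P) hG, h,
    MeasureTheory.measure_inter_conull hG]

private lemma ksEntropy_map_le' {X : Type*} [MeasurableSpace X] (T : X → X) (hT : Measurable T)
    (μ : MeasureTheory.Measure X) (π : X → X) (hπ : Measurable π) (G : Set X) (hG : μ Gᶜ = 0)
    (hGT : ∀ x ∈ G, T x ∈ G) (hcomm : ∀ x ∈ G, π (T x) = T (π x)) :
    ksEntropy T (μ.map π) ≤ ksEntropy T μ := by
  have hiter : ∀ (i : ℕ), ∀ x ∈ G, T^[i] x ∈ G ∧ π (T^[i] x) = T^[i] (π x) := by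
    intro i
    induction i with
    | zero => exact fun x hx => ⟨hx, rfl⟩
    | succ i ih =>
      intro x hx
      obtain ⟨hmem, heq⟩ := ih x hx
      refine ⟨?_, ?_⟩
      · rw [Function.iterate_succ_apply']; exact hGT _ hmem
      · rw [Function.iterate_succ_apply', Function.iterate_succ_apply', hcomm _ hmem, heq]
  refine iSup₂_le fun k f => ?_
  have hg : Measurable (f.1 ∘ π) := f.2.comp hπ
  have hproc : ∀ n, processEntropy T (μ.map π) f.1 n = processEntropy T μ (f.1 ∘ π) n := by
    intro n
    unfold processEntropy
    refine Finset.sum_congr rfl fun a _ => ?_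
    congr 2
    have hPmeas : MeasurableSet {x | ∀ i : Fin (n + 1), f.1 (T^[(i : ℕ)] x) = a i} := by
      have hset : {x | ∀ i : Fin (n + 1), f.1 (T^[(i : ℕ)] x) = a i}
          = ⋂ i : Fin (n + 1), (fun x => f.1 (T^[(i : ℕ)] x)) ⁻¹' {a i} := by
        ext x; simp
      rw [hset]
      exact MeasurableSet.iInter fun i => (f.2.comp (hT.iterate _)) (measurableSet_singleton _)
    rw [MeasureTheory.Measure.map_apply hπ hPmeas]
    refine measure_eq_of_inter_conull' μ hG ?_
    ext x
    simp only [Set.mem_inter_iff, Set.mem_preimage, Set.mem_setOf_eq, Function.comp_apply]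
    constructor
    · rintro ⟨h1, hxG⟩
      exact ⟨fun i => by rw [(hiter i x hxG).2]; exact h1 i, hxG⟩
    · rintro ⟨h1, hxG⟩
      exact ⟨fun i => by rw [← (hiter i x hxG).2]; exact h1 i, hxG⟩
  refine le_trans ?_ (le_iSup_of_le k (le_iSup_of_le ⟨f.1 ∘ π, hg⟩ le_rfl))
  exact le_of_eq (iInf_congr fun n => by rw [hproc n])

/-- If for each `s < t` some `s`-slice of `(X,T)` embeds into
`(Y,S)` by a Borel injection, then some `t`-slice of `(X,T)` embeds into
`(Y,S)` by a Borel injection. -/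
theorem slice_embeds_of_smaller_slices_embed
    {X Y : Type*} [MeasurableSpace X] [MeasurableSpace Y]
    (T : X → X) (S : Y → Y) (hX : IsBorelSystem X T) (hY : IsBorelSystem Y S)
    (t : ℝ) (ht : 0 < t)
    (h : ∀ s : ℝ, s < t → ∃ (A : Set X) (φ : X → Y), IsSlice T s A ∧
      Set.InjOn φ A ∧ Measurable (A.restrict φ) ∧ ∀ x ∈ A, φ (T x) = S (φ x)) :
    ∃ (A : Set X) (φ : X → Y), IsSlice T t A ∧
      Set.InjOn φ A ∧ Measurable (A.restrict φ) ∧ ∀ x ∈ A, φ (T x) = S (φ x) := by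
  classical
  haveI := hX.std
  haveI := hX.unc
  haveI := hY.std
  haveI := hY.unc
  obtain ⟨y₀⟩ : Nonempty Y := inferInstance
  -- the inverse of T
  set T' : X → X := Function.invFun T with hT'def
  have hT'li : Function.LeftInverse T' T := Function.leftInverse_invFun hX.bij.1
  have hT'ri : Function.RightInverse T' T := Function.rightInverse_invFun hX.bij.2
  have hT'pre : ∀ u : Set X, T' ⁻¹' u = T '' u := by
    intro u
    ext x
    constructor
    · intro hx; exact ⟨T' x, hx, hT'ri x⟩
    · rintro ⟨y, hy, rfl⟩; have : T' (T y) = y := hT'li y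
      simpa [Set.mem_preimage, this]
  have hT'meas : Measurable T' := by
    intro u hu
    rw [hT'pre]
    exact hX.image_meas u hu
  -- the approximating sequence of entropies
  set sq : ℕ → ℝ := fun n => t - t / (n + 1) with hsqdef
  have hsq_lt : ∀ n : ℕ, sq n < t := by
    intro n
    have : 0 < t / ((n : ℝ) + 1) := div_pos ht (by positivity)
    simp only [hsqdef]
    linarith
  have hsq_arch : ∀ r : ℝ, r < t → ∃ n : ℕ, r < sq n := by
    intro r hr
    obtain ⟨n, hn⟩ := exists_nat_gt (t / (t - r))
    refine ⟨n, ?_⟩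
    have htr : 0 < t - r := by linarith
    have hn1 : t / (t - r) < (n : ℝ) + 1 := by linarith
    have h2 : t < (t - r) * ((n : ℝ) + 1) := by
      have := (div_lt_iff₀ htr).1 hn1
      linarith [this]
    have h3 : t / ((n : ℝ) + 1) < t - r := (div_lt_iff₀ (by positivity)).2 (by linarith)
    simp only [hsqdef]
    linarith
  choose As φs hslice hinjs hmeass hequivs using fun n => h (sq n) (hsq_lt n)
  have hAmeas : ∀ n, MeasurableSet (As n) := fun n => (hslice n).1
  -- measurable global extensions of the maps φs
  set Φ : ℕ → X → Y := fun n x => if hx : x ∈ As n then φs n x else y₀ with hΦdef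
  have hΦmeas : ∀ n, Measurable (Φ n) := by
    intro n
    exact Measurable.dite (hmeass n) measurable_const (hAmeas n)
  have hΦeq : ∀ n, ∀ x ∈ As n, Φ n x = φs n x := by
    intro n x hx
    simp only [hΦdef, dif_pos hx]
  -- the invariant hulls
  set E : ℕ → Set X := fun n => ⋂ k : ℕ, (T^[k] ⁻¹' As n ∩ T'^[k] ⁻¹' As n) with hEdef
  have hEmem : ∀ n x, x ∈ E n ↔ ∀ k : ℕ, T^[k] x ∈ As n ∧ T'^[k] x ∈ As n := by
    intro n x
    simp [hEdef, Set.mem_iInter, forall_and]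
  have hEmeas : ∀ n, MeasurableSet (E n) := by
    intro n
    exact MeasurableSet.iInter fun k =>
      ((hX.meas.iterate k) (hAmeas n)).inter ((hT'meas.iterate k) (hAmeas n))
  have hET : ∀ n, ∀ x ∈ E n, T x ∈ E n := by
    intro n x hx
    rw [hEmem] at hx ⊢
    intro k
    constructor
    · have := (hx (k + 1)).1
      rwa [Function.iterate_succ_apply] at this
    · cases k with
      | zero => simpa using (hx 1).1
      | succ k =>
        have h1 : T'^[k + 1] (T x) = T'^[k] x := by
          rw [Function.iterate_succ_apply, hT'li x]
        rw [h1]; exact (hx k).2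
  have hET' : ∀ n, ∀ x ∈ E n, T' x ∈ E n := by
    intro n x hx
    rw [hEmem] at hx ⊢
    intro k
    constructor
    · cases k with
      | zero => simpa using (hx 1).2
      | succ k =>
        have h1 : T^[k + 1] (T' x) = T^[k] x := by
          rw [Function.iterate_succ_apply, hT'ri x]
        rw [h1]; exact (hx k).1
    · have := (hx (k + 1)).2
      rwa [Function.iterate_succ_apply] at this
  have hEsub : ∀ n, E n ⊆ As n := by
    intro n x hx
    simpa using ((hEmem n x).1 hx 0).1
  -- the disjointified invariant sets
  set F : ℕ → Set X := fun n => E n \ ⋃ (m : ℕ) (_ : m < n), E m with hFdef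
  have hFmeas : ∀ n, MeasurableSet (F n) :=
    fun n => (hEmeas n).diff (MeasurableSet.iUnion fun m => MeasurableSet.iUnion fun _ => hEmeas m)
  have hFsub : ∀ n, F n ⊆ As n := fun n => Set.diff_subset.trans (hEsub n)
  have hFsubE : ∀ n, F n ⊆ E n := fun n => Set.diff_subset
  have hFT : ∀ n, ∀ x ∈ F n, T x ∈ F n := by
    rintro n x ⟨hxE, hxU⟩
    refine ⟨hET n x hxE, fun hmem => hxU ?_⟩
    obtain ⟨m, hm⟩ := Set.mem_iUnion.1 hmem
    obtain ⟨hmlt, hTx⟩ := Set.mem_iUnion.1 hm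
    refine Set.mem_iUnion.2 ⟨m, Set.mem_iUnion.2 ⟨hmlt, ?_⟩⟩
    have := hET' m (T x) hTx
    rwa [hT'li x] at this
  have hFT' : ∀ n, ∀ x ∈ F n, T' x ∈ F n := by
    rintro n x ⟨hxE, hxU⟩
    refine ⟨hET' n x hxE, fun hmem => hxU ?_⟩
    obtain ⟨m, hm⟩ := Set.mem_iUnion.1 hmem
    obtain ⟨hmlt, hTx⟩ := Set.mem_iUnion.1 hm
    refine Set.mem_iUnion.2 ⟨m, Set.mem_iUnion.2 ⟨hmlt, ?_⟩⟩
    have := hET m (T' x) hTx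
    rwa [hT'ri x] at this
  have hFdisj : ∀ m n : ℕ, m < n → ∀ x, x ∈ F m → x ∈ F n → False := by
    intro m n hmn x hxm hxn
    exact hxn.2 (Set.mem_iUnion.2 ⟨m, Set.mem_iUnion.2 ⟨hmn, hFsubE m hxm⟩⟩)
  -- images are measurable (Lusin–Suslin)
  have himgmeas : ∀ m, MeasurableSet (φs m '' F m) := by
    intro m
    haveI : StandardBorelSpace ↥(As m) := (hAmeas m).standardBorel
    have hemb : MeasurableEmbedding ((As m).restrict (φs m)) :=
      (hmeass m).measurableEmbedding fun a b hab => Subtype.ext (hinjs m a.2 b.2 hab)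
    have himg : φs m '' F m = (As m).restrict (φs m) '' (Subtype.val ⁻¹' F m) := by
      ext y
      constructor
      · rintro ⟨x, hx, rfl⟩
        exact ⟨⟨x, hFsub m hx⟩, hx, rfl⟩
      · rintro ⟨⟨x, hxA⟩, hx, rfl⟩
        exact ⟨x, hx, rfl⟩
    rw [himg]
    exact hemb.measurableSet_image.2 (measurable_subtype_coe (hFmeas m))
  -- the collision sets
  set Bad : ℕ → ℕ → Set X := fun n m => F n ∩ Φ n ⁻¹' (φs m '' F m) with hBaddef
  have hBadmeas : ∀ n m, MeasurableSet (Bad n m) :=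
    fun n m => (hFmeas n).inter ((hΦmeas n) (himgmeas m))
  have hBadmem : ∀ n m x, x ∈ Bad n m ↔ x ∈ F n ∧ ∃ y ∈ F m, φs m y = φs n x := by
    intro n m x
    simp only [hBaddef, Set.mem_inter_iff, Set.mem_preimage, Set.mem_image]
    constructor
    · rintro ⟨hxF, y, hy, heq⟩
      exact ⟨hxF, y, hy, by rw [heq, hΦeq n x (hFsub n hxF)]⟩
    · rintro ⟨hxF, y, hy, heq⟩
      exact ⟨hxF, y, hy, by rw [heq, hΦeq n x (hFsub n hxF)]⟩
  have hBadinv : ∀ n m, T ⁻¹' Bad n m = Bad n m := by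
    intro n m
    ext x
    simp only [Set.mem_preimage]
    rw [hBadmem, hBadmem]
    constructor
    · rintro ⟨hTF, y, hyF, hy⟩
      have hxF : x ∈ F n := by
        have := hFT' n (T x) hTF
        rwa [hT'li x] at this
      refine ⟨hxF, T' y, hFT' m y hyF, ?_⟩
      have h1 : φs m y = S (φs m (T' y)) := by
        conv_lhs => rw [← hT'ri y]
        exact hequivs m (T' y) (hFsub m (hFT' m y hyF))
      have h2 : φs n (T x) = S (φs n x) := hequivs n x (hFsub n hxF)
      exact hY.bij.1 (by rw [← h1, hy, h2])
    · rintro ⟨hxF, y, hyF, hy⟩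
      refine ⟨hFT n x hxF, T y, hFT m y hyF, ?_⟩
      rw [hequivs n x (hFsub n hxF), hequivs m y (hFsub m hyF), hy]
  -- the final pieces
  set C : ℕ → Set X := fun n => F n \ ⋃ (m : ℕ) (_ : m < n), Bad n m with hCdef
  have hCmeas : ∀ n, MeasurableSet (C n) :=
    fun n => (hFmeas n).diff
      (MeasurableSet.iUnion fun m => MeasurableSet.iUnion fun _ => hBadmeas n m)
  have hCsubF : ∀ n, C n ⊆ F n := fun n => Set.diff_subset
  have hCsub : ∀ n, C n ⊆ As n := fun n => (hCsubF n).trans (hFsub n)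
  have hCT : ∀ n, ∀ x ∈ C n, T x ∈ C n := by
    rintro n x ⟨hxF, hxU⟩
    refine ⟨hFT n x hxF, fun hmem => hxU ?_⟩
    obtain ⟨m, hm⟩ := Set.mem_iUnion.1 hmem
    obtain ⟨hmlt, hTx⟩ := Set.mem_iUnion.1 hm
    refine Set.mem_iUnion.2 ⟨m, Set.mem_iUnion.2 ⟨hmlt, ?_⟩⟩
    rw [← hBadinv n m]
    exact hTx
  set Aset : Set X := ⋃ n, C n with hAsetdef
  have hAsetmeas : MeasurableSet Aset := MeasurableSet.iUnion fun n => hCmeas n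
  -- the glued map
  have hex : ∀ x : X, ∃ n : ℕ, x ∈ C n ∪ (⋃ m, C m)ᶜ := by
    intro x
    by_cases hx : x ∈ ⋃ m, C m
    · obtain ⟨n, hn⟩ := Set.mem_iUnion.1 hx
      exact ⟨n, Or.inl hn⟩
    · exact ⟨0, Or.inr hx⟩
  set φfin : X → Y := fun x => Φ (Nat.find (hex x)) x with hφfindef
  have hφfinmeas : Measurable φfin := by
    rw [hφfindef]
    have key := Measurable.find (f := Φ) (p := fun n x => x ∈ C n ∪ (⋃ m, C m)ᶜ) hΦmeas
      (fun n => (hCmeas n).union (MeasurableSet.iUnion fun m => hCmeas m).compl) hex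
    convert key using 4
  have hfind : ∀ n, ∀ x ∈ C n, Nat.find (hex x) = n := by
    intro n x hx
    have hxU : x ∈ ⋃ m, C m := Set.mem_iUnion.2 ⟨n, hx⟩
    rw [Nat.find_eq_iff]
    refine ⟨Or.inl hx, fun m hm hpm => ?_⟩
    rcases hpm with hxCm | hxc
    · exact hFdisj m n hm x (hCsubF m hxCm) (hCsubF n hx)
    · exact hxc hxU
  have hφfinC : ∀ n, ∀ x ∈ C n, φfin x = φs n x := by
    intro n x hx
    simp only [hφfindef]
    rw [hfind n x hx, hΦeq n x (hCsub n hx)]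
  refine ⟨Aset, φfin, ⟨hAsetmeas, ?_⟩, ?_, hφfinmeas.comp measurable_subtype_coe, ?_⟩
  · -- the slice property
    rintro μ ⟨hprob, herg⟩
    haveI := hprob
    have hEfull : ∀ n, μ (As n) = 1 → μ (E n) = 1 := by
      intro n hA1
      have mp := herg.toMeasurePreserving
      have mp' : MeasurePreserving T' μ μ := by
        refine ⟨hT'meas, ?_⟩
        refine MeasureTheory.Measure.ext fun u hu => ?_
        rw [MeasureTheory.Measure.map_apply hT'meas hu, hT'pre,
          ← mp.measure_preimage (hX.image_meas u hu).nullMeasurableSet,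
          Set.preimage_image_eq u hX.bij.1]
      have hcompl : μ (E n)ᶜ = 0 := by
        simp only [hEdef, Set.compl_iInter, Set.compl_inter]
        refine MeasureTheory.measure_iUnion_null fun k => MeasureTheory.measure_union_null ?_ ?_
        · rw [← Set.preimage_compl,
            (mp.iterate k).measure_preimage (hAmeas n).compl.nullMeasurableSet]
          rw [prob_compl_eq_zero_iff (hAmeas n)]
          exact hA1
        · rw [← Set.preimage_compl,
            (mp'.iterate k).measure_preimage (hAmeas n).compl.nullMeasurableSet]
          rw [prob_compl_eq_zero_iff (hAmeas n)]
          exact hA1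
      rwa [prob_compl_eq_zero_iff (hEmeas n)] at hcompl
    constructor
    · -- small entropy: full measure
      intro hlt
      have hne : ksEntropy T μ ≠ ⊤ := (hlt.trans ENNReal.ofReal_lt_top).ne
      have hex0 : ∃ n, ksEntropy T μ < ENNReal.ofReal (sq n) := by
        obtain ⟨n, hn⟩ := hsq_arch (ksEntropy T μ).toReal
          ((ENNReal.lt_ofReal_iff_toReal_lt hne).1 hlt)
        exact ⟨n, (ENNReal.lt_ofReal_iff_toReal_lt hne).2 hn⟩
      set n₀ := Nat.find hex0 with hn₀def
      have h0 : ksEntropy T μ < ENNReal.ofReal (sq n₀) := Nat.find_spec hex0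
      have hmin : ∀ m, m < n₀ → ENNReal.ofReal (sq m) ≤ ksEntropy T μ :=
        fun m hm => not_lt.1 (Nat.find_min hex0 hm)
      have hA1 : μ (As n₀) = 1 := ((hslice n₀).2 μ ⟨hprob, herg⟩).1 h0
      have hE1 : μ (E n₀) = 1 := hEfull n₀ hA1
      have hEm0 : ∀ m, m < n₀ → μ (E m) = 0 := fun m hm =>
        le_antisymm (le_trans (measure_mono (hEsub m))
          (((hslice m).2 μ ⟨hprob, herg⟩).2 (hmin m hm)).le) (zero_le)
      have hF1 : μ (F n₀) = 1 := by
        rw [hFdef]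
        rw [MeasureTheory.measure_diff_null
          (MeasureTheory.measure_iUnion_null fun m =>
            MeasureTheory.measure_iUnion_null fun hm => hEm0 m hm)]
        exact hE1
      have hBad0 : ∀ m, m < n₀ → μ (Bad n₀ m) = 0 := by
        intro m hm
        rcases herg.toPreErgodic.measure_self_or_compl_eq_zero (hBadmeas n₀ m)
          (hBadinv n₀ m) with h' | h'
        · exact h'
        exfalso
        have hBad1 : μ (Bad n₀ m) = 1 := (prob_compl_eq_zero_iff (hBadmeas n₀ m)).1 h'
        have hBadsubF : Bad n₀ m ⊆ F n₀ := fun x hx => hx.1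
        obtain ⟨x₀, hx₀⟩ : (Bad n₀ m).Nonempty :=
          MeasureTheory.nonempty_of_measure_ne_zero (by rw [hBad1]; exact one_ne_zero)
        obtain ⟨hx₀F, y₁, hy₁F, -⟩ := (hBadmem n₀ m x₀).1 hx₀
        haveI hnem : Nonempty ↥(As m) := ⟨⟨y₁, hFsub m hy₁F⟩⟩
        haveI hnen : Nonempty ↥(As n₀) := ⟨⟨x₀, hFsub n₀ hx₀F⟩⟩
        haveI : StandardBorelSpace ↥(As m) := (hAmeas m).standardBorel
        haveI : StandardBorelSpace ↥(As n₀) := (hAmeas n₀).standardBorel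
        have hembm : MeasurableEmbedding ((As m).restrict (φs m)) :=
          (hmeass m).measurableEmbedding fun a b hab => Subtype.ext (hinjs m a.2 b.2 hab)
        have hembn : MeasurableEmbedding ((As n₀).restrict (φs n₀)) :=
          (hmeass n₀).measurableEmbedding fun a b hab => Subtype.ext (hinjs n₀ a.2 b.2 hab)
        obtain ⟨rm, hrmmeas, hrm⟩ := hembm.exists_measurable_extend measurable_id fun _ => hnem
        obtain ⟨rn, hrnmeas, hrn⟩ := hembn.exists_measurable_extend measurable_id fun _ => hnen
        set ψ : X → X := fun x => (rm (Φ n₀ x) : X) with hψdef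
        set ρ : X → X := fun x => (rn (Φ m x) : X) with hρdef
        have hψmeas : Measurable ψ := measurable_subtype_coe.comp (hrmmeas.comp (hΦmeas n₀))
        have hρmeas : Measurable ρ := measurable_subtype_coe.comp (hrnmeas.comp (hΦmeas m))
        have hψspec : ∀ x ∈ Bad n₀ m, ψ x ∈ F m ∧ φs m (ψ x) = φs n₀ x := by
          intro x hx
          obtain ⟨hxF, y, hyF, hy⟩ := (hBadmem n₀ m x).1 hx
          have hyA : y ∈ As m := hFsub m hyF
          have h1 : Φ n₀ x = (As m).restrict (φs m) ⟨y, hyA⟩ := by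
            rw [hΦeq n₀ x (hFsub n₀ hxF), ← hy]; rfl
          have h2 : rm (Φ n₀ x) = ⟨y, hyA⟩ := by rw [h1]; exact congrFun hrm ⟨y, hyA⟩
          constructor
          · show (rm (Φ n₀ x) : X) ∈ F m
            rw [h2]; exact hyF
          · show φs m (rm (Φ n₀ x) : X) = φs n₀ x
            rw [h2]; exact hy
        have hTBad : ∀ x ∈ Bad n₀ m, T x ∈ Bad n₀ m := by
          intro x hx
          rw [← hBadinv n₀ m] at hx
          exact hx
        have hψcomm : ∀ x ∈ Bad n₀ m, ψ (T x) = T (ψ x) := by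
          intro x hx
          obtain ⟨hmem1, heq1⟩ := hψspec (T x) (hTBad x hx)
          obtain ⟨hmem2, heq2⟩ := hψspec x hx
          refine hinjs m (hFsub m hmem1) (hFsub m (hFT m _ hmem2)) ?_
          rw [heq1, hequivs n₀ x (hFsub n₀ hx.1), ← heq2, ← hequivs m (ψ x) (hFsub m hmem2)]
        have hρψ : ∀ x ∈ Bad n₀ m, ρ (ψ x) = x := by
          intro x hx
          obtain ⟨hmem, heq⟩ := hψspec x hx
          have hxA : x ∈ As n₀ := hFsub n₀ hx.1
          have h1 : Φ m (ψ x) = (As n₀).restrict (φs n₀) ⟨x, hxA⟩ := by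
            rw [hΦeq m _ (hFsub m hmem), heq]; rfl
          have h2 : rn ((As n₀).restrict (φs n₀) ⟨x, hxA⟩) = ⟨x, hxA⟩ := congrFun hrn ⟨x, hxA⟩
          show (rn (Φ m (ψ x)) : X) = x
          rw [h1, h2]
        set μ' := μ.map ψ with hμ'def
        haveI hμ'prob : IsProbabilityMeasure μ' :=
          MeasureTheory.Measure.isProbabilityMeasure_map hψmeas.aemeasurable
        have hae : ∀ᵐ x ∂μ, x ∈ Bad n₀ m := by
          rw [MeasureTheory.ae_iff]
          exact h'
        have hμ'T : MeasurePreserving T μ' μ' := by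
          refine ⟨hX.meas, ?_⟩
          calc (μ.map ψ).map T = μ.map (T ∘ ψ) := MeasureTheory.Measure.map_map hX.meas hψmeas
          _ = μ.map (ψ ∘ T) := MeasureTheory.Measure.map_congr
              (hae.mono fun x hx => (hψcomm x hx).symm)
          _ = (μ.map T).map ψ := (MeasureTheory.Measure.map_map hψmeas hX.meas).symm
          _ = μ.map ψ := by rw [herg.toMeasurePreserving.map_eq]
        have hμ'erg : Ergodic T μ' := by
          refine ⟨hμ'T, ⟨fun u hu hinv => ?_⟩⟩
          have hupre : T ⁻¹' (ψ ⁻¹' u) =ᵐ[μ] (ψ ⁻¹' u) := by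
            refine hae.mono fun x hx => ?_
            show (T x ∈ ψ ⁻¹' u) = (x ∈ ψ ⁻¹' u)
            simp only [Set.mem_preimage]
            rw [hψcomm x hx]
            have : T (ψ x) ∈ u ↔ ψ x ∈ u := by
              conv_rhs => rw [← hinv]
              rfl
            exact propext this
          refine eventuallyConst_set'.2 ?_
          rcases herg.quasiErgodic.ae_empty_or_univ₀
            ((hψmeas hu).nullMeasurableSet) hupre with h'' | h''
          · left
            rw [MeasureTheory.ae_eq_empty] at h'' ⊢
            rw [hμ'def, MeasureTheory.Measure.map_apply hψmeas hu]
            exact h''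
          · right
            rw [MeasureTheory.ae_eq_univ] at h'' ⊢
            rw [hμ'def, MeasureTheory.Measure.map_apply hψmeas hu.compl, Set.preimage_compl]
            exact h''
        have hψinj : Set.InjOn ψ (Bad n₀ m) := fun a ha b hb hab => by
          rw [← hρψ a ha, ← hρψ b hb, hab]
        set G : Set X := ψ '' Bad n₀ m with hGdef
        have hGmeas : MeasurableSet G := by
          haveI : StandardBorelSpace ↥(Bad n₀ m) := (hBadmeas n₀ m).standardBorel
          have hembψ : MeasurableEmbedding ((Bad n₀ m).restrict ψ) :=
            (hψmeas.comp measurable_subtype_coe).measurableEmbedding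
              fun a b hab => Subtype.ext (hψinj a.2 b.2 hab)
          have hGr : G = Set.range ((Bad n₀ m).restrict ψ) := (Set.range_restrict ψ _).symm
          rw [hGr]
          exact hembψ.measurableSet_range
        have hGc : μ' Gᶜ = 0 := by
          rw [hμ'def, MeasureTheory.Measure.map_apply hψmeas hGmeas.compl]
          refine measure_mono_null ?_ h'
          intro x hx hxB
          exact hx (Set.mem_image_of_mem ψ hxB)
        have hGT : ∀ x ∈ G, T x ∈ G := by
          rintro x ⟨b, hb, rfl⟩
          rw [← hψcomm b hb]
          exact Set.mem_image_of_mem ψ (hTBad b hb)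
        have hGcomm : ∀ x ∈ G, ρ (T x) = T (ρ x) := by
          rintro x ⟨b, hb, rfl⟩
          rw [← hψcomm b hb, hρψ _ (hTBad b hb), hρψ b hb]
        have hmapρ : μ'.map ρ = μ := by
          rw [hμ'def, MeasureTheory.Measure.map_map hρmeas hψmeas]
          calc μ.map (ρ ∘ ψ) = μ.map id :=
            MeasureTheory.Measure.map_congr (hae.mono fun x hx => hρψ x hx)
          _ = μ := MeasureTheory.Measure.map_id
        have hent : ksEntropy T μ ≤ ksEntropy T μ' := by
          have hle := ksEntropy_map_le' T hX.meas μ' ρ hρmeas G hGc hGT hGcomm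
          rwa [hmapρ] at hle
        have hμ'Am : μ' (As m) = 0 :=
          ((hslice m).2 μ' ⟨hμ'prob, hμ'erg⟩).2 (le_trans (hmin m hm) hent)
        have hμ'Am1 : (1 : ℝ≥0∞) ≤ μ' (As m) := by
          rw [hμ'def, MeasureTheory.Measure.map_apply hψmeas (hAmeas m)]
          calc (1 : ℝ≥0∞) = μ (Bad n₀ m) := hBad1.symm
          _ ≤ μ (ψ ⁻¹' As m) := measure_mono fun x hx => hFsub m (hψspec x hx).1
        rw [hμ'Am] at hμ'Am1
        simp at hμ'Am1
      have hC1 : μ (C n₀) = 1 := by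
        rw [hCdef]
        rw [MeasureTheory.measure_diff_null
          (MeasureTheory.measure_iUnion_null fun m =>
            MeasureTheory.measure_iUnion_null fun hm => hBad0 m hm)]
        exact hF1
      refine le_antisymm prob_le_one ?_
      calc (1 : ℝ≥0∞) = μ (C n₀) := hC1.symm
      _ ≤ μ Aset := measure_mono (Set.subset_iUnion C n₀)
    · -- large entropy: null
      intro hge
      refine MeasureTheory.measure_iUnion_null fun n => measure_mono_null (hCsub n) ?_
      exact ((hslice n).2 μ ⟨hprob, herg⟩).2
        (le_trans (ENNReal.ofReal_le_ofReal (hsq_lt n).le) hge)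
  · -- injectivity
    rintro x hx y hy hxy
    obtain ⟨n, hxC⟩ := Set.mem_iUnion.1 hx
    obtain ⟨m, hyC⟩ := Set.mem_iUnion.1 hy
    rw [hφfinC n x hxC, hφfinC m y hyC] at hxy
    rcases lt_trichotomy n m with hlt | rfl | hlt
    · exfalso
      apply hyC.2
      refine Set.mem_iUnion.2 ⟨n, Set.mem_iUnion.2 ⟨hlt, ?_⟩⟩
      rw [hBadmem]
      exact ⟨hCsubF m hyC, x, hCsubF n hxC, hxy⟩
    · exact hinjs n (hCsub n hxC) (hCsub n hyC) hxy
    · exfalso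
      apply hxC.2
      refine Set.mem_iUnion.2 ⟨m, Set.mem_iUnion.2 ⟨hlt, ?_⟩⟩
      rw [hBadmem]
      exact ⟨hCsubF n hxC, y, hCsubF m hyC, hxy.symm⟩
  · -- equivariance
    intro x hx
    obtain ⟨n, hxC⟩ := Set.mem_iUnion.1 hx
    rw [hφfinC n (T x) (hCT n x hxC), hφfinC n x hxC]
    exact hequivs n x (hCsub n hxC)
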